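/- Let n ≥ 2, let r be a positive integer not divisible by n, let d = gcd(r, n), and for i = 1,…,n let f_i ∈ ℂ[x_1,…,x_n] be the coefficient of z^{−1} in the formal expansion at z = ∞ of [(z−x_1)⋯(z−x_n)]^{r/n}/(z−x_i). Then for a point (x_1,…,x_n) ∈ ℂ^n: f_i(x_1,…,x_n) = 0 for all i = 1,…,n if and only if there exists a monic polynomial g(z) of degree d such that (z−x_1)⋯(z−x_n) = g(z)^{n/d}. In particular, if gcd(r, n) = 1, the common zero set of f_1,…,f_n consists exactly of the points with x_1 = x_2 = ⋯ = x_n. -/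

import Mathlib

open MvPolynomial Polynomial

/-- The generalized binomial coefficient `μ(μ−1)⋯(μ−k+1)/k!` for `μ ∈ ℂ`. -/
noncomputable def genBinom (μ : ℂ) (k : ℕ) : ℂ :=
  (∏ m ∈ Finset.range k, (μ - m)) / (k.factorial : ℂ)

/-- The formal expansion at `z = ∞` of `∏ⱼ (1 − xⱼ w)^μ` in the variable `w = z⁻¹`. -/
noncomputable def prodBinomSeries (n : ℕ) (μ : ℂ) :
    PowerSeries (MvPolynomial (Fin n) ℂ) :=
  ∏ j : Fin n, PowerSeries.mk fun k =>
    MvPolynomial.C ((-1 : ℂ) ^ k * genBinom μ k) * MvPolynomial.X j ^ k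

/-- `jackVector n r i` is the coefficient of `z⁻¹` in the formal expansion at `z = ∞` of
`[(z−x₁)⋯(z−xₙ)]^{r/n}/(z−xᵢ)`. -/
noncomputable def jackVector (n r : ℕ) (i : Fin n) : MvPolynomial (Fin n) ℂ :=
  PowerSeries.coeff (R := MvPolynomial (Fin n) ℂ) r
    (prodBinomSeries n ((r : ℂ) / (n : ℂ)) * PowerSeries.mk fun k => MvPolynomial.X i ^ k)

lemma genBinom_zero (μ : ℂ) : genBinom μ 0 = 1 := by simp [genBinom]

lemma genBinom_succ (μ : ℂ) (k : ℕ) :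
    ((k : ℂ) + 1) * genBinom μ (k + 1) = (μ - k) * genBinom μ k := by
  have h1 : ((k.factorial : ℂ)) ≠ 0 := Nat.cast_ne_zero.2 k.factorial_ne_zero
  have h2 : ((k : ℂ) + 1) ≠ 0 := Nat.cast_add_one_ne_zero k
  simp only [genBinom, Finset.prod_range_succ, Nat.factorial_succ]
  push_cast
  field_simp

noncomputable def bser (μ a : ℂ) : PowerSeries ℂ :=
  PowerSeries.mk fun k => (-1 : ℂ) ^ k * genBinom μ k * a ^ k

noncomputable def geo (a : ℂ) : PowerSeries ℂ := PowerSeries.mk fun k => a ^ k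

lemma geo_inv (a : ℂ) :
    ((1 - Polynomial.C a * Polynomial.X : ℂ[X]) : PowerSeries ℂ) * geo a = 1 := by
  have h : ((1 - Polynomial.C a * Polynomial.X : ℂ[X]) : PowerSeries ℂ)
      = 1 - PowerSeries.C a * PowerSeries.X := by
    push_cast; ring
  rw [h, sub_mul, one_mul]
  ext k
  cases k with
  | zero => simp [geo]
  | succ k =>
    rw [mul_assoc]
    simp [geo, PowerSeries.coeff_succ_X_mul, pow_succ, mul_comm]

lemma bser_ode (μ a : ℂ) :
    ((1 - Polynomial.C a * Polynomial.X : ℂ[X]) : PowerSeries ℂ) * PowerSeries.derivative ℂ (bser μ a)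
      = PowerSeries.C μ * ((Polynomial.derivative (1 - Polynomial.C a * Polynomial.X) : ℂ[X]) : PowerSeries ℂ)
        * bser μ a := by
  have h : ((1 - Polynomial.C a * Polynomial.X : ℂ[X]) : PowerSeries ℂ)
      = 1 - PowerSeries.C a * PowerSeries.X := by push_cast; ring
  have h2 : (Polynomial.derivative (1 - Polynomial.C a * Polynomial.X) : ℂ[X]) = Polynomial.C (-a) := by
    simp [map_sub]
  rw [h, h2]
  have h3 : ((Polynomial.C (-a) : ℂ[X]) : PowerSeries ℂ) = PowerSeries.C (-a) := by push_cast; ring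
  rw [h3, sub_mul, one_mul, mul_assoc]
  ext k
  rw [map_sub]
  rw [PowerSeries.coeff_derivative]
  cases k with
  | zero =>
    simp [bser, PowerSeries.coeff_derivative, genBinom_succ]
    have := genBinom_succ μ 0
    simp at this
    rw [this]; ring
  | succ k =>
    simp only [PowerSeries.coeff_C_mul, PowerSeries.coeff_succ_X_mul,
      PowerSeries.coeff_derivative, map_mul, bser, PowerSeries.coeff_mk, mul_assoc]
    have hrec := genBinom_succ μ (k+1)
    push_cast at hrec ⊢
    linear_combination ((-1:ℂ)^k * a^(k+2)) * hrec


lemma ode_prod {ι : Type*} (μ : ℂ) (s : Finset ι) (q : ι → ℂ[X]) (F : ι → PowerSeries ℂ)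
    (h : ∀ i ∈ s, ((q i : ℂ[X]) : PowerSeries ℂ) * PowerSeries.derivative ℂ (F i)
      = PowerSeries.C μ * ((Polynomial.derivative (q i) : ℂ[X]) : PowerSeries ℂ) * F i) :
    ((∏ i ∈ s, q i : ℂ[X]) : PowerSeries ℂ) * PowerSeries.derivative ℂ (∏ i ∈ s, F i)
      = PowerSeries.C μ * ((Polynomial.derivative (∏ i ∈ s, q i) : ℂ[X]) : PowerSeries ℂ)
        * ∏ i ∈ s, F i := by
  classical
  induction s using Finset.induction with
  | empty => simp
  | @insert a s' hx ih =>
    simp only [Finset.prod_insert hx]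
    have hD : PowerSeries.derivative ℂ (F a * ∏ i ∈ s', F i)
        = F a * PowerSeries.derivative ℂ (∏ i ∈ s', F i)
          + (∏ i ∈ s', F i) * PowerSeries.derivative ℂ (F a) := by
      rw [Derivation.leibniz]; simp [smul_eq_mul]
    have ha := h a (Finset.mem_insert_self a s')
    have ih' := ih fun i hi => h i (Finset.mem_insert_of_mem hi)
    rw [hD, derivative_mul]
    push_cast
    linear_combination (((q a : ℂ[X]) : PowerSeries ℂ) * F a) * ih'
      + (((∏ i ∈ s', q i : ℂ[X]) : PowerSeries ℂ) * ∏ i ∈ s', F i) * ha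

lemma ode_unique (N R : ℂ) (hN : N ≠ 0) (p : ℂ[X]) (hp : p.coeff 0 = 1)
    (F G : PowerSeries ℂ)
    (hF : PowerSeries.C N * (p : PowerSeries ℂ) * PowerSeries.derivative ℂ F
      = PowerSeries.C R * ((Polynomial.derivative p : ℂ[X]) : PowerSeries ℂ) * F)
    (hG : PowerSeries.C N * (p : PowerSeries ℂ) * PowerSeries.derivative ℂ G
      = PowerSeries.C R * ((Polynomial.derivative p : ℂ[X]) : PowerSeries ℂ) * G)
    (h0 : PowerSeries.coeff 0 F = PowerSeries.coeff 0 G) : F = G := by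
  set Δ := F - G with hΔ
  have hode : PowerSeries.C N * (p : PowerSeries ℂ) * PowerSeries.derivative ℂ Δ
      = PowerSeries.C R * ((Polynomial.derivative p : ℂ[X]) : PowerSeries ℂ) * Δ := by
    rw [hΔ, map_sub, mul_sub, mul_sub, hF, hG]
  have key : ∀ j, PowerSeries.coeff j Δ = 0 := by
    intro j
    induction j using Nat.strong_induction_on with
    | _ j ih =>
      match j with
      | 0 => simpa [hΔ] using sub_eq_zero_of_eq h0
      | (j+1) =>
        rw [mul_assoc, mul_assoc] at hode
        have hc := congrArg (PowerSeries.coeff j) hode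
        rw [PowerSeries.coeff_C_mul, PowerSeries.coeff_C_mul] at hc
        rw [PowerSeries.coeff_mul, PowerSeries.coeff_mul] at hc
        have hL : ∑ x ∈ Finset.HasAntidiagonal.antidiagonal j,
            PowerSeries.coeff x.1 (p : PowerSeries ℂ)
              * PowerSeries.coeff x.2 (PowerSeries.derivative ℂ Δ)
            = (j + 1 : ℂ) * PowerSeries.coeff (j+1) Δ := by
          rw [Finset.sum_eq_single (0, j)]
          · simp [PowerSeries.coeff_derivative, Polynomial.coeff_coe, hp]; ring
          · rintro ⟨a, b⟩ hab hne
            rw [Finset.HasAntidiagonal.mem_antidiagonal] at hab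
            have hb : b < j := by
              rcases Nat.lt_or_ge b j with h | h
              · exact h
              · exfalso; apply hne
                have : b = j := le_antisymm (by omega) h
                subst this
                simp_all
            rw [PowerSeries.coeff_derivative, ih (b+1) (by omega)]
            ring
          · intro hmem
            exact absurd (by simp) hmem
        have hR : ∑ x ∈ Finset.HasAntidiagonal.antidiagonal j,
            PowerSeries.coeff x.1 ((Polynomial.derivative p : ℂ[X]) : PowerSeries ℂ)
              * PowerSeries.coeff x.2 Δ = 0 := by
          apply Finset.sum_eq_zero
          rintro ⟨a, b⟩ hab
          rw [Finset.HasAntidiagonal.mem_antidiagonal] at hab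
          rw [ih b (by omega)]
          ring
        rw [hL, hR, mul_zero] at hc
        have : (j + 1 : ℂ) ≠ 0 := Nat.cast_add_one_ne_zero j
        have hNj : N * ((j+1 : ℂ) * PowerSeries.coeff (j+1) Δ) = 0 := hc
        rcases mul_eq_zero.mp hNj with h | h
        · exact absurd h hN
        · rcases mul_eq_zero.mp h with h | h
          · exact absurd h this
          · exact h
  have : Δ = 0 := by ext k; simpa using key k
  have := sub_eq_zero.mp (by rw [← hΔ]; exact this)
  exact this

lemma coeff_mul_geo (h : PowerSeries ℂ) (t : ℂ) (r : ℕ) :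
    PowerSeries.coeff r (h * geo t)
      = ∑ k ∈ Finset.range (r+1), PowerSeries.coeff k h * t^(r-k) := by
  rw [PowerSeries.coeff_mul, Finset.Nat.sum_antidiagonal_eq_sum_range_succ_mk]
  simp [geo]

lemma sum_pow_eq (c : ℕ → ℂ) (r : ℕ) (t : ℂ) (ht : t ≠ 0) :
    ∑ k ∈ Finset.range (r+1), c k * t^(r-k)
      = t^r * ∑ k ∈ Finset.range (r+1), c k * (t⁻¹)^k := by
  rw [Finset.mul_sum]
  apply Finset.sum_congr rfl
  intro k hk
  rw [Finset.mem_range] at hk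
  rw [inv_pow, pow_sub₀ t ht (by omega : k ≤ r)]
  field_simp

lemma coeff_T (c : ℕ → ℂ) (r m : ℕ) (hm : m ≤ r) :
    (∑ k ∈ Finset.range (r+1), Polynomial.C (c k) * Polynomial.X ^ k).coeff m = c m := by
  rw [Polynomial.finset_sum_coeff]
  rw [Finset.sum_eq_single m]
  · simp
  · intro b _ hne
    rw [Polynomial.coeff_C_mul, Polynomial.coeff_X_pow, if_neg (fun h => hne h.symm), mul_zero]
  · intro hmem; exact absurd (Finset.mem_range.2 (by omega)) hmem

lemma natDegree_T_le (c : ℕ → ℂ) (r : ℕ) :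
    (∑ k ∈ Finset.range (r+1), Polynomial.C (c k) * Polynomial.X ^ k).natDegree ≤ r := by
  apply Polynomial.natDegree_sum_le_of_forall_le
  intro k hk
  rw [Finset.mem_range] at hk
  exact le_trans (Polynomial.natDegree_C_mul_le _ _) (by simp; omega)

lemma eval_T (c : ℕ → ℂ) (r : ℕ) (t : ℂ) :
    (∑ k ∈ Finset.range (r+1), Polynomial.C (c k) * Polynomial.X ^ k).eval t
      = ∑ k ∈ Finset.range (r+1), c k * t^k := by
  simp [Polynomial.eval_finset_sum]

lemma local_vanish {p T : ℂ[X]} {α : ℂ} {N R : ℂ}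
    (hpT : Polynomial.C N * p * Polynomial.derivative T
      = Polynomial.C R * Polynomial.derivative p * T)
    (hp0 : p ≠ 0) (hT0 : T ≠ 0) (hα : p.IsRoot α) (hTα : T.IsRoot α) :
    N * (rootMultiplicity α T : ℂ) = R * (rootMultiplicity α p : ℂ) := by
  obtain ⟨m₁, hm⟩ := Nat.exists_eq_add_of_lt ((rootMultiplicity_pos hp0).2 hα)
  obtain ⟨s₁, hs⟩ := Nat.exists_eq_add_of_lt ((rootMultiplicity_pos hT0).2 hTα)
  rw [zero_add] at hm hs
  set u := p /ₘ (Polynomial.X - Polynomial.C α) ^ rootMultiplicity α p with hu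
  set v := T /ₘ (Polynomial.X - Polynomial.C α) ^ rootMultiplicity α T with hv
  have hpu : (Polynomial.X - Polynomial.C α) ^ (m₁ + 1) * u = p := by
    rw [hu, ← hm]; exact Polynomial.pow_mul_divByMonic_rootMultiplicity_eq p α
  have hTv : (Polynomial.X - Polynomial.C α) ^ (s₁ + 1) * v = T := by
    rw [hv, ← hs]; exact Polynomial.pow_mul_divByMonic_rootMultiplicity_eq T α
  have huα : u.eval α ≠ 0 := by
    rw [hu]; exact Polynomial.eval_divByMonic_pow_rootMultiplicity_ne_zero α hp0
  have hvα : v.eval α ≠ 0 := by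
    rw [hv]; exact Polynomial.eval_divByMonic_pow_rootMultiplicity_ne_zero α hT0
  have hdp : Polynomial.derivative p
      = (Polynomial.X - Polynomial.C α) ^ m₁ *
        (Polynomial.C ((m₁ : ℂ) + 1) * u + (Polynomial.X - Polynomial.C α) * Polynomial.derivative u) := by
    rw [← hpu, derivative_mul, derivative_pow]
    simp only [derivative_sub, derivative_X, derivative_C, sub_zero, Nat.add_sub_cancel]
    push_cast
    ring
  have hdT : Polynomial.derivative T
      = (Polynomial.X - Polynomial.C α) ^ s₁ *
        (Polynomial.C ((s₁ : ℂ) + 1) * v + (Polynomial.X - Polynomial.C α) * Polynomial.derivative v) := by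
    rw [← hTv, derivative_mul, derivative_pow]
    simp only [derivative_sub, derivative_X, derivative_C, sub_zero, Nat.add_sub_cancel]
    push_cast
    ring
  set W : ℂ[X] := Polynomial.C N * u *
      (Polynomial.C ((s₁ : ℂ) + 1) * v + (Polynomial.X - Polynomial.C α) * Polynomial.derivative v)
    - Polynomial.C R *
      (Polynomial.C ((m₁ : ℂ) + 1) * u + (Polynomial.X - Polynomial.C α) * Polynomial.derivative u) * v
    with hW
  have hkey : (Polynomial.X - Polynomial.C α) ^ (m₁ + s₁ + 1) * W = 0 := by
    rw [hW]
    have := hpT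
    rw [hdp, hdT, ← hpu, ← hTv] at this
    linear_combination this
  have hWz : W = 0 := by
    rcases mul_eq_zero.mp hkey with h | h
    · exact absurd h (pow_ne_zero _ (Polynomial.X_sub_C_ne_zero α))
    · exact h
  have := congrArg (Polynomial.eval α) hWz
  rw [hW] at this
  simp only [Polynomial.eval_sub, Polynomial.eval_mul, Polynomial.eval_add, Polynomial.eval_C,
    Polynomial.eval_sub, Polynomial.eval_X, sub_self, zero_mul, mul_zero, add_zero,
    Polynomial.eval_zero] at this
  rw [hm, hs]
  push_cast
  have h2 : (N * ((s₁ : ℂ) + 1) - R * ((m₁ : ℂ) + 1)) * (u.eval α * v.eval α) = 0 := by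
    linear_combination this
  rcases mul_eq_zero.mp h2 with h | h
  · linear_combination h
  · exact absurd h (mul_ne_zero huα hvα)

lemma jack_eval (n r : ℕ) (x : Fin n → ℂ) (i : Fin n) :
    MvPolynomial.eval x (jackVector n r i)
      = PowerSeries.coeff r ((∏ j : Fin n, bser ((r:ℂ)/(n:ℂ)) (x j)) * geo (x i)) := by
  rw [jackVector, ← PowerSeries.coeff_map]
  congr 1
  rw [map_mul]
  congr 1
  · rw [prodBinomSeries, map_prod]
    apply Finset.prod_congr rfl
    intro j _
    ext k
    simp [PowerSeries.coeff_map, bser]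
  · ext k
    simp [PowerSeries.coeff_map, geo]

lemma bser_const (μ a : ℂ) : PowerSeries.coeff 0 (bser μ a) = 1 := by
  simp [bser, genBinom]

lemma ptilde_coeff_zero {n : ℕ} (x : Fin n → ℂ) :
    (∏ j : Fin n, (1 - Polynomial.C (x j) * Polynomial.X)).coeff 0 = 1 := by
  rw [Polynomial.coeff_zero_eq_eval_zero]
  simp [Polynomial.eval_prod]

lemma ptilde_ne_zero {n : ℕ} (x : Fin n → ℂ) :
    (∏ j : Fin n, (1 - Polynomial.C (x j) * Polynomial.X)) ≠ 0 := by
  intro h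
  have := ptilde_coeff_zero x
  rw [h] at this
  simp at this

lemma ptilde_natDegree_le {n : ℕ} (x : Fin n → ℂ) :
    (∏ j : Fin n, (1 - Polynomial.C (x j) * Polynomial.X)).natDegree ≤ n := by
  refine le_trans (Polynomial.natDegree_prod_le _ _) ?_
  calc ∑ j : Fin n, (1 - Polynomial.C (x j) * Polynomial.X).natDegree
      ≤ ∑ _j : Fin n, 1 := by
        apply Finset.sum_le_sum
        intro j _
        refine le_trans (Polynomial.natDegree_sub_le _ _) ?_
        rw [max_le_iff]
        refine ⟨by simp, le_trans (Polynomial.natDegree_C_mul_le _ _) (by simp)⟩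
    _ = n := by simp

lemma rootMult_linear {a α : ℂ} (ha : a ≠ 0) (hα : α = a⁻¹) :
    rootMultiplicity α (1 - Polynomial.C a * Polynomial.X) = 1 := by
  have hfac : (1 - Polynomial.C a * Polynomial.X)
      = Polynomial.C (-a) * (Polynomial.X - Polynomial.C α) := by
    rw [hα, mul_sub, ← Polynomial.C_mul]
    have h1 : (-a) * a⁻¹ = -1 := by field_simp
    rw [h1]
    simp [Polynomial.C_neg]
    ring
  rw [hfac, rootMultiplicity_mul (by
    apply mul_ne_zero
    · simpa using neg_ne_zero.2 ha
    · exact Polynomial.X_sub_C_ne_zero α)]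
  rw [Polynomial.rootMultiplicity_C, Polynomial.rootMultiplicity_X_sub_C_self]
lemma rootMult_linear_ne {a α : ℂ} (h : a * α ≠ 1) :
    rootMultiplicity α (1 - Polynomial.C a * Polynomial.X) = 0 := by
  apply Polynomial.rootMultiplicity_eq_zero
  intro hroot
  simp [Polynomial.IsRoot] at hroot
  exact h (by linear_combination -hroot)


lemma rootMult_prod {ι : Type*} (s : Finset ι) (f : ι → ℂ[X]) (hf : ∀ i ∈ s, f i ≠ 0) (α : ℂ) :
    rootMultiplicity α (∏ i ∈ s, f i) = ∑ i ∈ s, rootMultiplicity α (f i) := by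
  classical
  induction s using Finset.induction with
  | empty =>
    simp
  | @insert a s' hx ih =>
    rw [Finset.prod_insert hx, Finset.sum_insert hx,
      Polynomial.rootMultiplicity_mul (by
        apply mul_ne_zero (hf a (Finset.mem_insert_self a s'))
        rw [Finset.prod_ne_zero_iff]
        exact fun i hi => hf i (Finset.mem_insert_of_mem hi)),
      ih (fun i hi => hf i (Finset.mem_insert_of_mem hi))]

lemma lin_ne_zero (a : ℂ) : (1 - Polynomial.C a * Polynomial.X) ≠ 0 := by
  intro h
  have := congrArg (fun p => Polynomial.coeff p 0) h
  simp at this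

lemma rootMult_ptilde {n : ℕ} (x : Fin n → ℂ) (b : ℂ) (hb : b ≠ 0) :
    rootMultiplicity b⁻¹ (∏ j : Fin n, (1 - Polynomial.C (x j) * Polynomial.X))
      = (Finset.univ.filter fun j => x j = b).card := by
  classical
  rw [rootMult_prod _ _ (fun i _ => lin_ne_zero (x i)) _, Finset.card_filter]
  apply Finset.sum_congr rfl
  intro j _
  by_cases hxj : x j = b
  · rw [if_pos hxj, rootMult_linear (hxj ▸ hb) (by rw [hxj])]
  · rw [if_neg hxj, rootMult_linear_ne]
    intro hone
    apply hxj
    field_simp at hone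
    exact hone

lemma pow_rootMult_sub_one_dvd_derivative (p : ℂ[X]) (α : ℂ) (m₁ : ℕ)
    (hm : rootMultiplicity α p = m₁ + 1) :
    (Polynomial.X - Polynomial.C α) ^ m₁ ∣ Polynomial.derivative p := by
  have hpu := Polynomial.pow_mul_divByMonic_rootMultiplicity_eq p α
  rw [hm] at hpu
  rw [← hpu, derivative_mul, derivative_pow]
  apply dvd_add
  · apply Dvd.dvd.mul_right
    apply Dvd.dvd.mul_right
    apply Dvd.dvd.mul_left
    rw [Nat.add_sub_cancel]
  · exact dvd_mul_of_dvd_left (pow_dvd_pow _ (by omega)) _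


lemma converse_main (n r : ℕ) (hn : 1 ≤ n) (hr : 0 < r) (x : Fin n → ℂ)
    (hyp : ∀ i, MvPolynomial.eval x (jackVector n r i) = 0) (a : ℂ) :
    (n / Nat.gcd r n) ∣ (Finset.univ.filter fun j => x j = a).card := by
  classical
  set d := Nat.gcd r n with hd
  have hdpos : 0 < d := Nat.gcd_pos_of_pos_left n hr
  set n' := n / d with hn'
  set r' := r / d with hr'
  have hdn : d ∣ n := Nat.gcd_dvd_right r n
  have hdr : d ∣ r := Nat.gcd_dvd_left r n
  have hnn' : n = d * n' := (Nat.div_mul_cancel hdn).symm.trans (mul_comm _ _)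
  have hrr' : r = d * r' := (Nat.div_mul_cancel hdr).symm.trans (mul_comm _ _)
  have hn0 : (n : ℂ) ≠ 0 := Nat.cast_ne_zero.2 (by omega)
  set μ := (r : ℂ) / (n : ℂ) with hμ
  have hCnμ : (n : ℂ) * μ = (r : ℂ) := by
    rw [hμ]; field_simp
  set h : PowerSeries ℂ := ∏ j : Fin n, bser μ (x j) with hh
  set pt : ℂ[X] := ∏ j : Fin n, (1 - Polynomial.C (x j) * Polynomial.X) with hpt
  have hode := ode_prod μ Finset.univ (fun j => 1 - Polynomial.C (x j) * Polynomial.X)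
    (fun j => bser μ (x j)) (fun j _ => bser_ode μ (x j))
  rw [← hpt, ← hh] at hode
  have hodeN : PowerSeries.C (n : ℂ) * (pt : PowerSeries ℂ) * PowerSeries.derivative ℂ h
      = PowerSeries.C (r : ℂ) * ((Polynomial.derivative pt : ℂ[X]) : PowerSeries ℂ) * h := by
    have := congrArg (fun z => PowerSeries.C (n : ℂ) * z) hode
    simp only [← mul_assoc] at this
    calc PowerSeries.C (n : ℂ) * (pt : PowerSeries ℂ) * PowerSeries.derivative ℂ h
        = PowerSeries.C (n : ℂ) * ((pt : PowerSeries ℂ) * PowerSeries.derivative ℂ h) := by ring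
      _ = PowerSeries.C (n : ℂ) * (PowerSeries.C μ
            * ((Polynomial.derivative pt : ℂ[X]) : PowerSeries ℂ) * h) := by rw [hode]
      _ = (PowerSeries.C ((n : ℂ) * μ))
            * ((Polynomial.derivative pt : ℂ[X]) : PowerSeries ℂ) * h := by
            rw [map_mul]; ring
      _ = _ := by rw [hCnμ]
  set c : ℕ → ℂ := fun k => PowerSeries.coeff k h with hc
  set T : ℂ[X] := ∑ k ∈ Finset.range (r+1), Polynomial.C (c k) * Polynomial.X ^ k with hT
  have hc0 : c 0 = 1 := by
    rw [hc]
    simp only [hh, PowerSeries.coeff_zero_eq_constantCoeff, map_prod]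
    rw [Finset.prod_eq_one]
    intro j _
    rw [← PowerSeries.coeff_zero_eq_constantCoeff_apply]
    exact bser_const μ (x j)
  have hTc0 : T.coeff 0 = 1 := by rw [hT, coeff_T c r 0 (by omega), hc0]
  have hTne : T ≠ 0 := fun hz => by simp [hz] at hTc0
  have hptne : pt ≠ 0 := ptilde_ne_zero x
  have hptc0 : pt.coeff 0 = 1 := ptilde_coeff_zero x
  have hyp2 : ∀ i, ∑ k ∈ Finset.range (r+1), c k * (x i)^(r-k) = 0 := by
    intro i
    have := hyp i
    rw [jack_eval, ← hμ, ← hh, coeff_mul_geo] at this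
    exact this
  have hypT : ∀ i, x i ≠ 0 → T.eval ((x i)⁻¹) = 0 := by
    intro i hne
    have h2 := hyp2 i
    rw [sum_pow_eq c r (x i) hne] at h2
    rcases mul_eq_zero.mp h2 with h3 | h3
    · exact absurd h3 (pow_ne_zero r hne)
    · rw [hT, eval_T]; exact h3
  have hTroots : ∀ α : ℂ, pt.IsRoot α → T.IsRoot α := by
    intro α hroot
    rw [Polynomial.IsRoot, hpt, Polynomial.eval_prod] at hroot
    obtain ⟨j, _, hj⟩ := Finset.prod_eq_zero_iff.mp hroot
    simp only [Polynomial.eval_sub, Polynomial.eval_one, Polynomial.eval_mul,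
      Polynomial.eval_C, Polynomial.eval_X] at hj
    have hj' : x j * α = 1 := by linear_combination -hj
    have hxj : x j ≠ 0 := by intro hz; rw [hz] at hj'; simp at hj'
    have hα : α = (x j)⁻¹ := by field_simp; linear_combination hj'
    rw [Polynomial.IsRoot, hα]
    exact hypT j hxj
  set A : ℂ[X] := Polynomial.C (n : ℂ) * pt * Polynomial.derivative T
      - Polynomial.C (r : ℂ) * Polynomial.derivative pt * T with hA
  -- X^r divides A
  have hXrA : (Polynomial.X : ℂ[X]) ^ r ∣ A := by
    have hsub : (PowerSeries.X : PowerSeries ℂ) ^ (r+1) ∣ h - (T : PowerSeries ℂ) := by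
      rw [PowerSeries.X_pow_dvd_iff]
      intro m hm
      rw [map_sub, Polynomial.coeff_coe, hT, coeff_T c r m (by omega)]
      simp [hc]
    obtain ⟨ρ, hρ⟩ := hsub
    have hTps : (T : PowerSeries ℂ) = h - PowerSeries.X ^ (r+1) * ρ := by
      rw [← hρ]; ring
    have hXco : ((Polynomial.X ^ (r+1) : ℂ[X]) : PowerSeries ℂ) = PowerSeries.X ^ (r+1) := by
      push_cast; ring
    have hder : PowerSeries.derivative ℂ (PowerSeries.X ^ (r+1) * ρ)
        = PowerSeries.X ^ (r+1) * PowerSeries.derivative ℂ ρ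
          + ρ * (PowerSeries.C ((r : ℂ) + 1) * PowerSeries.X ^ r) := by
      rw [← hXco, Derivation.leibniz, smul_eq_mul, smul_eq_mul, PowerSeries.derivative_coe,
        Polynomial.derivative_X_pow]
      congr 2
      push_cast [Nat.add_sub_cancel]
      ring
    have hAps : (A : PowerSeries ℂ) = PowerSeries.X ^ r *
        (PowerSeries.C (r : ℂ) * ((Polynomial.derivative pt : ℂ[X]) : PowerSeries ℂ)
            * (PowerSeries.X * ρ)
          - PowerSeries.C (n : ℂ) * (pt : PowerSeries ℂ)
            * (PowerSeries.X * PowerSeries.derivative ℂ ρ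
                + PowerSeries.C ((r : ℂ) + 1) * ρ)) := by
      have hAco : (A : PowerSeries ℂ)
          = PowerSeries.C (n : ℂ) * (pt : PowerSeries ℂ)
              * PowerSeries.derivative ℂ (T : PowerSeries ℂ)
            - PowerSeries.C (r : ℂ) * ((Polynomial.derivative pt : ℂ[X]) : PowerSeries ℂ)
              * (T : PowerSeries ℂ) := by
        rw [hA, PowerSeries.derivative_coe]
        push_cast
        ring
      rw [hAco, hTps, map_sub, hder]
      linear_combination hodeN
    rw [Polynomial.X_pow_dvd_iff]
    intro m hm
    have := congrArg (PowerSeries.coeff m) hAps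
    rw [Polynomial.coeff_coe] at this
    rw [this, PowerSeries.coeff_X_pow_mul']
    rw [if_neg (by omega)]
  have hA0 : A = 0 := by
    by_contra hAne
    have hrle : r ≤ A.natDegree := by
      have := Polynomial.natDegree_le_of_dvd hXrA hAne
      simpa using this
    by_cases hn₀ : pt.natDegree = 0
    · have hpt1 : pt = 1 := by
        have := Polynomial.eq_C_of_natDegree_eq_zero hn₀
        rw [this, hptc0]; simp
      have : A = Polynomial.C (n : ℂ) * Polynomial.derivative T := by
        rw [hA, hpt1]; simp
      have hdegA : A.natDegree ≤ r - 1 := by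
        rw [this]
        refine le_trans (Polynomial.natDegree_C_mul_le _ _) ?_
        refine le_trans (Polynomial.natDegree_derivative_le T) ?_
        have := natDegree_T_le c r
        rw [← hT] at this
        omega
      omega
    · -- pt has positive degree
      have hptdvd : pt ∣ A := by
        have hroots_le : pt.roots ≤ A.roots := by
          rw [Multiset.le_iff_count]
          intro α
          by_cases hmem : α ∈ pt.roots
          · rw [Polynomial.count_roots, Polynomial.count_roots]
            have hroot : pt.IsRoot α := Polynomial.isRoot_of_mem_roots hmem
            have hmpos : 0 < rootMultiplicity α pt := (Polynomial.rootMultiplicity_pos hptne).2 hroot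
            obtain ⟨m₁, hm₁⟩ := Nat.exists_eq_add_of_lt hmpos
            rw [zero_add] at hm₁
            rw [Polynomial.le_rootMultiplicity_iff hAne]
            have h1 : (Polynomial.X - Polynomial.C α) ^ rootMultiplicity α pt
                ∣ Polynomial.C (n : ℂ) * pt * Polynomial.derivative T :=
              Dvd.dvd.mul_right (Dvd.dvd.mul_left (Polynomial.pow_rootMultiplicity_dvd pt α) _) _
            have h2 : (Polynomial.X - Polynomial.C α) ^ rootMultiplicity α pt
                ∣ Polynomial.C (r : ℂ) * Polynomial.derivative pt * T := by
              rw [hm₁, pow_succ]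
              apply mul_dvd_mul
              · exact Dvd.dvd.mul_left (pow_rootMult_sub_one_dvd_derivative pt α m₁ hm₁) _
              · exact Polynomial.dvd_iff_isRoot.2 (hTroots α hroot)
            rw [hA]
            exact dvd_sub h1 h2
          · rw [Multiset.count_eq_zero_of_notMem hmem]
            omega
        have hproddvd : (pt.roots.map fun a => Polynomial.X - Polynomial.C a).prod ∣ A :=
          dvd_trans (Multiset.prod_dvd_prod_of_le (Multiset.map_le_map hroots_le))
            (Polynomial.prod_multiset_X_sub_C_dvd A)
        have hfact := Polynomial.Splits.eq_prod_roots
          (IsAlgClosed.splits pt)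
        have hlc : IsUnit (Polynomial.C pt.leadingCoeff) :=
          Polynomial.isUnit_C.2 (isUnit_iff_ne_zero.2 (Polynomial.leadingCoeff_ne_zero.2 hptne))
        rw [hfact]
        exact hlc.mul_left_dvd.mpr hproddvd
      have hcop : IsCoprime ((Polynomial.X : ℂ[X]) ^ r) pt := by
        apply IsCoprime.pow_left
        have hXd : (Polynomial.X : ℂ[X]) ∣ pt - 1 := by
          rw [Polynomial.X_dvd_iff]
          simp [hptc0]
        obtain ⟨q, hq⟩ := hXd
        exact ⟨-q, 1, by linear_combination hq⟩
      have hmul : (Polynomial.X : ℂ[X]) ^ r * pt ∣ A := hcop.mul_dvd hXrA hptdvd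
      have hdeg1 : r + pt.natDegree ≤ A.natDegree := by
        have := Polynomial.natDegree_le_of_dvd hmul hAne
        rw [Polynomial.natDegree_mul (pow_ne_zero r Polynomial.X_ne_zero) hptne, Polynomial.natDegree_X_pow] at this
        exact this
      have hdeg2 : A.natDegree ≤ pt.natDegree + r - 1 := by
        rw [hA]
        refine le_trans (Polynomial.natDegree_sub_le _ _) ?_
        rw [max_le_iff]
        constructor
        · refine le_trans (Polynomial.natDegree_mul_le) ?_
          have h1 : (Polynomial.C (n:ℂ) * pt).natDegree ≤ pt.natDegree :=
            le_trans Polynomial.natDegree_mul_le (by simp)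
          have h2 : (Polynomial.derivative T).natDegree ≤ r - 1 := by
            refine le_trans (Polynomial.natDegree_derivative_le T) ?_
            have := natDegree_T_le c r
            rw [← hT] at this
            omega
          omega
        · refine le_trans (Polynomial.natDegree_mul_le) ?_
          have h1 : (Polynomial.C (r:ℂ) * Polynomial.derivative pt).natDegree ≤ pt.natDegree - 1 := by
            refine le_trans Polynomial.natDegree_mul_le ?_
            have := Polynomial.natDegree_derivative_le pt
            simp only [Polynomial.natDegree_C, zero_add]
            exact this
          have h2 : T.natDegree ≤ r := by
            have := natDegree_T_le c r
            rw [← hT] at this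
            exact this
          omega
      omega
  -- now A = 0; fiber divisibility for nonzero values
  have claim1 : ∀ b : ℂ, b ≠ 0 → n' ∣ (Finset.univ.filter fun j => x j = b).card := by
    intro b hb
    by_cases hmem : ∃ i, x i = b
    · obtain ⟨i, hi⟩ := hmem
      have hxi : x i ≠ 0 := by rw [hi]; exact hb
      set α : ℂ := b⁻¹ with hα
      have hroot : pt.IsRoot α := by
        rw [Polynomial.IsRoot, hpt, Polynomial.eval_prod]
        apply Finset.prod_eq_zero (Finset.mem_univ i)
        simp only [Polynomial.eval_sub, Polynomial.eval_one, Polynomial.eval_mul,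
          Polynomial.eval_C, Polynomial.eval_X, hi, hα]
        field_simp
        ring
      have hTroot : T.IsRoot α := hTroots α hroot
      have heq : Polynomial.C (n : ℂ) * pt * Polynomial.derivative T
          = Polynomial.C (r : ℂ) * Polynomial.derivative pt * T := by
        have : A = 0 := hA0
        rw [hA] at this
        linear_combination this
      have hloc := local_vanish heq hptne hTne hroot hTroot
      have hmult : rootMultiplicity α pt = (Finset.univ.filter fun j => x j = b).card := by
        rw [hα, ← hpt] at *
        exact (hpt ▸ rootMult_ptilde x b hb)
      have hnat : n * rootMultiplicity α T = r * rootMultiplicity α pt := by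
        exact_mod_cast hloc
      set s := rootMultiplicity α T
      set m := rootMultiplicity α pt
      have hds : n' * s = r' * m := by
        have : d * (n' * s) = d * (r' * m) := by
          rw [← mul_assoc, ← mul_assoc, ← hnn', ← hrr']
          exact hnat
        exact Nat.eq_of_mul_eq_mul_left hdpos this
      have hcop : Nat.Coprime r' n' := Nat.coprime_div_gcd_div_gcd hdpos
      have hdvd : n' ∣ r' * m := ⟨s, hds.symm⟩
      have : n' ∣ m := (Nat.Coprime.dvd_of_dvd_mul_left hcop.symm hdvd)
      rw [← hmult]
      exact this
    · have : (Finset.univ.filter fun j => x j = b).card = 0 := by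
        rw [Finset.card_eq_zero, Finset.filter_eq_empty_iff]
        intro j _
        exact fun hj => hmem ⟨j, hj⟩
      rw [this]
      exact dvd_zero n'
  by_cases ha : a ≠ 0
  · exact claim1 a ha
  · push_neg at ha
    subst ha
    by_cases h0 : (0 : ℂ) ∈ Finset.image x Finset.univ
    · have hsum : ∑ b ∈ Finset.image x Finset.univ,
          (Finset.univ.filter fun j => x j = b).card = n := by
        rw [← Finset.card_eq_sum_card_image]
        simp
      rw [← Finset.add_sum_erase _ _ h0] at hsum
      have hS : n' ∣ ∑ b ∈ (Finset.image x Finset.univ).erase 0,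
          (Finset.univ.filter fun j => x j = b).card := by
        apply Finset.dvd_sum
        intro b hbmem
        exact claim1 b (Finset.ne_of_mem_erase hbmem)
      have hn'n : n' ∣ n := Nat.div_dvd_of_dvd hdn
      have := (Nat.dvd_add_right hS).mp (by rw [add_comm, hsum]; exact hn'n)
      exact this
    · have : (Finset.univ.filter fun j => x j = (0:ℂ)).card = 0 := by
        rw [Finset.card_eq_zero, Finset.filter_eq_empty_iff]
        intro j _
        intro hj
        exact h0 (Finset.mem_image.2 ⟨j, Finset.mem_univ j, hj⟩)
      rw [this]
      exact dvd_zero n'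


lemma forward_main (n r : ℕ) (hn : 1 ≤ n) (hr : 0 < r) (x : Fin n → ℂ)
    (g : ℂ[X]) (hmonic : g.Monic)
    (hP : (∏ i : Fin n, (Polynomial.X - Polynomial.C (x i))) = g ^ (n / Nat.gcd r n))
    (i : Fin n) : MvPolynomial.eval x (jackVector n r i) = 0 := by
  classical
  set d := Nat.gcd r n with hd
  have hdpos : 0 < d := Nat.gcd_pos_of_pos_left n hr
  set n' := n / d with hn'def
  set r' := r / d with hr'def
  have hdn : d ∣ n := Nat.gcd_dvd_right r n
  have hdr : d ∣ r := Nat.gcd_dvd_left r n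
  have hnn' : n = d * n' := (Nat.div_mul_cancel hdn).symm.trans (mul_comm _ _)
  have hrr' : r = d * r' := (Nat.div_mul_cancel hdr).symm.trans (mul_comm _ _)
  have hn'pos : 0 < n' := by
    rw [hn'def]
    exact Nat.div_pos (Nat.le_of_dvd (by omega) hdn) hdpos
  have hr'pos : 0 < r' := by
    rw [hr'def]
    exact Nat.div_pos (Nat.le_of_dvd hr hdr) hdpos
  obtain ⟨n₁, hn₁⟩ : ∃ n₁, n' = n₁ + 1 := ⟨n' - 1, by omega⟩
  obtain ⟨r₁, hr₁⟩ : ∃ r₁, r' = r₁ + 1 := ⟨r' - 1, by omega⟩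
  have hn0 : (n : ℂ) ≠ 0 := Nat.cast_ne_zero.2 (by omega)
  set μ := (r : ℂ) / (n : ℂ) with hμ
  have hCnμ : (n : ℂ) * μ = (r : ℂ) := by rw [hμ]; field_simp
  -- multiset of roots
  set B := g.roots with hB
  have hg : g = (B.map fun b => Polynomial.X - Polynomial.C b).prod :=
    Polynomial.Splits.eq_prod_roots_of_monic (IsAlgClosed.splits g) hmonic
  set M : Multiset ℂ := Finset.univ.val.map x with hM
  have hPM : (M.map fun b => Polynomial.X - Polynomial.C b).prod
      = ∏ j : Fin n, (Polynomial.X - Polynomial.C (x j)) := by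
    rw [hM, Multiset.map_map, Finset.prod_eq_multiset_prod]
    rfl
  have hMB : M = n' • B := by
    have h1 : (M.map fun b => Polynomial.X - Polynomial.C b).prod
        = ((n' • B).map fun b => Polynomial.X - Polynomial.C b).prod := by
      rw [hPM, hP, Multiset.map_nsmul, Multiset.prod_nsmul, ← hg]
    have h2 := congrArg Polynomial.roots h1
    rwa [Polynomial.roots_multiset_prod_X_sub_C, Polynomial.roots_multiset_prod_X_sub_C] at h2
  have hcardM : Multiset.card M = n := by rw [hM]; simp
  have hcardB : Multiset.card B = d := by
    have h2 := congrArg Multiset.card hMB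
    rw [hcardM, Multiset.card_nsmul] at h2
    have h4 : n' * d = n' * Multiset.card B := by rw [mul_comm n' d, ← hnn', h2]
    exact (Nat.eq_of_mul_eq_mul_left hn'pos h4).symm
  set gt : ℂ[X] := (B.map fun b => 1 - Polynomial.C b * Polynomial.X).prod with hgt
  set pt : ℂ[X] := ∏ j : Fin n, (1 - Polynomial.C (x j) * Polynomial.X) with hpt
  have hptgt : pt = gt ^ n' := by
    rw [hpt, hgt, Finset.prod_eq_multiset_prod, ← Multiset.prod_nsmul, ← Multiset.map_nsmul, ← hMB,
      hM, Multiset.map_map]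
    rfl
  set h : PowerSeries ℂ := ∏ j : Fin n, bser μ (x j) with hh
  have hode := ode_prod μ Finset.univ (fun j => 1 - Polynomial.C (x j) * Polynomial.X)
    (fun j => bser μ (x j)) (fun j _ => bser_ode μ (x j))
  rw [← hpt, ← hh] at hode
  have hodeN : PowerSeries.C (n : ℂ) * (pt : PowerSeries ℂ) * PowerSeries.derivative ℂ h
      = PowerSeries.C (r : ℂ) * ((Polynomial.derivative pt : ℂ[X]) : PowerSeries ℂ) * h := by
    calc PowerSeries.C (n : ℂ) * (pt : PowerSeries ℂ) * PowerSeries.derivative ℂ h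
        = PowerSeries.C (n : ℂ) * ((pt : PowerSeries ℂ) * PowerSeries.derivative ℂ h) := by ring
      _ = PowerSeries.C (n : ℂ) * (PowerSeries.C μ
            * ((Polynomial.derivative pt : ℂ[X]) : PowerSeries ℂ) * h) := by rw [hode]
      _ = (PowerSeries.C ((n : ℂ) * μ))
            * ((Polynomial.derivative pt : ℂ[X]) : PowerSeries ℂ) * h := by rw [map_mul]; ring
      _ = _ := by rw [hCnμ]
  -- polynomial ODE for gt ^ r'
  have hsc : (n : ℂ) * (r' : ℂ) = (r : ℂ) * (n' : ℂ) := by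
    have : n * r' = r * n' := by rw [hnn', hrr']; ring
    exact_mod_cast this
  have hgode : Polynomial.C (n : ℂ) * pt * Polynomial.derivative (gt ^ r')
      = Polynomial.C (r : ℂ) * Polynomial.derivative pt * (gt ^ r') := by
    rw [hptgt, hn₁, hr₁, Polynomial.derivative_pow, Polynomial.derivative_pow,
      Nat.add_sub_cancel, Nat.add_sub_cancel]
    have hscP : Polynomial.C ((n : ℂ)) * Polynomial.C (((r₁ : ℂ) + 1))
        = Polynomial.C ((r : ℂ)) * Polynomial.C (((n₁ : ℂ) + 1)) := by
      rw [← map_mul, ← map_mul]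
      congr 1
      have hnat : n * (r₁ + 1) = r * (n₁ + 1) := by rw [← hr₁, ← hn₁, hnn', hrr']; ring
      exact_mod_cast hnat
    push_cast
    linear_combination (gt ^ (n₁ + r₁ + 1) * Polynomial.derivative gt) * hscP
  have hgode_ps : PowerSeries.C (n : ℂ) * (pt : PowerSeries ℂ)
        * PowerSeries.derivative ℂ ((gt ^ r' : ℂ[X]) : PowerSeries ℂ)
      = PowerSeries.C (r : ℂ) * ((Polynomial.derivative pt : ℂ[X]) : PowerSeries ℂ)
        * ((gt ^ r' : ℂ[X]) : PowerSeries ℂ) := by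
    have := congrArg (fun q : ℂ[X] => (q : PowerSeries ℂ)) hgode
    push_cast at this
    rw [PowerSeries.derivative_coe]
    push_cast
    linear_combination this
  have hgt0 : gt.coeff 0 = 1 := by
    rw [Polynomial.coeff_zero_eq_eval_zero, hgt]
    rw [Polynomial.eval_multiset_prod]
    rw [Multiset.map_map]
    apply Multiset.prod_eq_one
    intro z hz
    rw [Multiset.mem_map] at hz
    obtain ⟨b, _, hb⟩ := hz
    rw [← hb]
    simp
  have hptc0 : pt.coeff 0 = 1 := by
    rw [hptgt, Polynomial.coeff_zero_eq_eval_zero, Polynomial.eval_pow,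
      ← Polynomial.coeff_zero_eq_eval_zero, hgt0, one_pow]
  have hcoeff0 : PowerSeries.coeff 0 h = PowerSeries.coeff 0 ((gt ^ r' : ℂ[X]) : PowerSeries ℂ) := by
    rw [Polynomial.coeff_coe]
    rw [Polynomial.coeff_zero_eq_eval_zero, Polynomial.eval_pow,
      ← Polynomial.coeff_zero_eq_eval_zero, hgt0, one_pow]
    simp only [hh, PowerSeries.coeff_zero_eq_constantCoeff, map_prod]
    rw [Finset.prod_eq_one]
    intro j _
    rw [← PowerSeries.coeff_zero_eq_constantCoeff_apply]
    exact bser_const μ (x j)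
  have hhuniq : h = ((gt ^ r' : ℂ[X]) : PowerSeries ℂ) :=
    ode_unique (n : ℂ) (r : ℂ) hn0 pt hptc0 _ _ hodeN hgode_ps hcoeff0
  -- x i is a root of g, i.e. a member of B
  have hxiB : x i ∈ B := by
    have hxiM : x i ∈ M := by
      rw [hM]
      exact Multiset.mem_map_of_mem x (Finset.mem_univ_val i)
    rw [hMB] at hxiM
    exact ((Multiset.mem_nsmul).mp hxiM).2
  set gt1 : ℂ[X] := ((B.erase (x i)).map fun b => 1 - Polynomial.C b * Polynomial.X).prod with hgt1
  have hgtfac : gt = (1 - Polynomial.C (x i) * Polynomial.X) * gt1 := by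
    rw [hgt, hgt1, ← Multiset.cons_erase hxiB, Multiset.map_cons, Multiset.prod_cons,
      Multiset.cons_erase hxiB]
  have hdeg_gt : gt.natDegree ≤ d := by
    refine le_trans (Polynomial.natDegree_multiset_prod_le _) ?_
    rw [Multiset.map_map]
    have hb : ∀ z ∈ B.map (fun b => ((1 : ℂ[X]) - Polynomial.C b * Polynomial.X).natDegree), z ≤ 1 := by
      intro z hz
      rw [Multiset.mem_map] at hz
      obtain ⟨b, _, hbz⟩ := hz
      rw [← hbz]
      refine le_trans (Polynomial.natDegree_sub_le _ _) ?_
      rw [max_le_iff]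
      exact ⟨by simp, le_trans (Polynomial.natDegree_C_mul_le _ _) (by simp)⟩
    have := Multiset.sum_le_card_nsmul _ 1 hb
    rw [Multiset.card_map, hcardB] at this
    simpa using this
  have hdeg_gt1 : gt1.natDegree ≤ d - 1 := by
    refine le_trans (Polynomial.natDegree_multiset_prod_le _) ?_
    rw [Multiset.map_map]
    have hb : ∀ z ∈ (B.erase (x i)).map
        (fun b => ((1 : ℂ[X]) - Polynomial.C b * Polynomial.X).natDegree), z ≤ 1 := by
      intro z hz
      rw [Multiset.mem_map] at hz
      obtain ⟨b, _, hbz⟩ := hz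
      rw [← hbz]
      refine le_trans (Polynomial.natDegree_sub_le _ _) ?_
      rw [max_le_iff]
      exact ⟨by simp, le_trans (Polynomial.natDegree_C_mul_le _ _) (by simp)⟩
    have := Multiset.sum_le_card_nsmul _ 1 hb
    rw [Multiset.card_map, Multiset.card_erase_of_mem hxiB, hcardB] at this
    simpa using this
  -- final computation
  rw [jack_eval, ← hμ, ← hh, hhuniq]
  have hsplit : (gt ^ r' : ℂ[X]) = (1 - Polynomial.C (x i) * Polynomial.X) * (gt1 * gt ^ r₁) := by
    rw [hr₁, hgtfac]
    ring
  rw [hsplit]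
  have hco : (((1 - Polynomial.C (x i) * Polynomial.X) * (gt1 * gt ^ r₁) : ℂ[X]) : PowerSeries ℂ)
        * geo (x i)
      = ((gt1 * gt ^ r₁ : ℂ[X]) : PowerSeries ℂ)
        * (((1 - Polynomial.C (x i) * Polynomial.X : ℂ[X]) : PowerSeries ℂ) * geo (x i)) := by
    push_cast
    ring
  rw [hco, geo_inv, mul_one, Polynomial.coeff_coe]
  apply Polynomial.coeff_eq_zero_of_natDegree_lt
  have h1 : (gt1 * gt ^ r₁).natDegree ≤ (d - 1) + r₁ * d := by
    refine le_trans Polynomial.natDegree_mul_le ?_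
    have h2 : (gt ^ r₁).natDegree ≤ r₁ * d :=
      le_trans (Polynomial.natDegree_pow_le) (by exact Nat.mul_le_mul_left r₁ hdeg_gt)
    omega
  have hr2 : r = d * r₁ + d := by rw [hrr', hr₁]; ring
  have hcm : r₁ * d = d * r₁ := Nat.mul_comm _ _
  omega


lemma build_g (n : ℕ) (n' : ℕ) (hn'pos : 0 < n') (hdvdn : n' ∣ n) (x : Fin n → ℂ)
    (hfib : ∀ a : ℂ, n' ∣ (Finset.univ.filter fun j => x j = a).card) :
    ∃ g : Polynomial ℂ, g.Monic ∧ g.natDegree = n / n' ∧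
      (∏ i : Fin n, (Polynomial.X - Polynomial.C (x i))) = g ^ n' := by
  classical
  set img := Finset.univ.image x with himg
  set g : Polynomial ℂ := ∏ a ∈ img,
    (Polynomial.X - Polynomial.C a) ^ ((Finset.univ.filter fun j => x j = a).card / n') with hg
  have hmonic : g.Monic := by
    apply Polynomial.monic_prod_of_monic
    intro a _
    exact (Polynomial.monic_X_sub_C a).pow _
  have hPfib : (∏ i : Fin n, (Polynomial.X - Polynomial.C (x i)))
      = ∏ a ∈ img, (Polynomial.X - Polynomial.C a)
          ^ ((Finset.univ.filter fun j => x j = a).card) := by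
    rw [himg]
    exact Finset.prod_comp (fun a => Polynomial.X - Polynomial.C a) x
  have hpow : g ^ n' = ∏ i : Fin n, (Polynomial.X - Polynomial.C (x i)) := by
    rw [hg, ← Finset.prod_pow, hPfib]
    apply Finset.prod_congr rfl
    intro a _
    rw [← pow_mul, Nat.div_mul_cancel (hfib a)]
  have hdegP : (∏ i : Fin n, (Polynomial.X - Polynomial.C (x i))).natDegree = n := by
    rw [Polynomial.natDegree_prod_of_monic _ _ (fun i _ => Polynomial.monic_X_sub_C (x i))]
    simp
  have hdeg : g.natDegree = n / n' := by
    have h1 : (g ^ n').natDegree = n := by rw [hpow]; exact hdegP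
    rw [Polynomial.natDegree_pow] at h1
    have h3 : n' * (n / n') = n := Nat.mul_div_cancel' hdvdn
    exact Nat.eq_of_mul_eq_mul_left hn'pos (h1.trans h3.symm)
  exact ⟨g, hmonic, hdeg, hpow.symm⟩


/-- Let `n ≥ 2`, let `r` be a positive integer not divisible by `n`, and let
`d = gcd(r,n)`.  A point `(x₁,…,xₙ) ∈ ℂⁿ` is a common zero of the singular vectors
`f₁,…,fₙ` (`fᵢ = jackVector n r i`) if and only if `(z−x₁)⋯(z−xₙ)` is the `(n/d)`-th power
of a monic polynomial of degree `d`.  In particular, if `gcd(r,n) = 1` the common zero set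
consists exactly of the points with `x₁ = x₂ = ⋯ = xₙ`. -/
theorem jack_vector_common_zeros (n r : ℕ) (hn : 2 ≤ n) (hr : 0 < r) (hnr : ¬ n ∣ r) :
    (∀ x : Fin n → ℂ,
      ((∀ i : Fin n, MvPolynomial.eval x (jackVector n r i) = 0) ↔
        ∃ g : Polynomial ℂ, g.Monic ∧ g.natDegree = Nat.gcd r n ∧
          (∏ i : Fin n, (Polynomial.X - Polynomial.C (x i))) = g ^ (n / Nat.gcd r n))) ∧
    (Nat.gcd r n = 1 →
      ∀ x : Fin n → ℂ,
        ((∀ i : Fin n, MvPolynomial.eval x (jackVector n r i) = 0) ↔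
          ∀ i j : Fin n, x i = x j)) := by
  have hn1 : 1 ≤ n := by omega
  have hdn : Nat.gcd r n ∣ n := Nat.gcd_dvd_right r n
  have hdpos : 0 < Nat.gcd r n := Nat.gcd_pos_of_pos_left n hr
  have hn'pos : 0 < n / Nat.gcd r n :=
    Nat.div_pos (Nat.le_of_dvd (by omega) hdn) hdpos
  have part1 : ∀ x : Fin n → ℂ,
      ((∀ i : Fin n, MvPolynomial.eval x (jackVector n r i) = 0) ↔
        ∃ g : Polynomial ℂ, g.Monic ∧ g.natDegree = Nat.gcd r n ∧
          (∏ i : Fin n, (Polynomial.X - Polynomial.C (x i))) = g ^ (n / Nat.gcd r n)) := by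
    intro x
    constructor
    · intro heval
      obtain ⟨g, hmonic, hdeg, hP⟩ := build_g n (n / Nat.gcd r n) hn'pos
        (Nat.div_dvd_of_dvd hdn) x (converse_main n r hn1 hr x heval)
      refine ⟨g, hmonic, ?_, hP⟩
      rw [hdeg, Nat.div_div_self hdn (by omega)]
    · rintro ⟨g, hmonic, _, hP⟩
      exact forward_main n r hn1 hr x g hmonic hP
  refine ⟨part1, ?_⟩
  intro hgcd x
  rw [part1 x]
  constructor
  · rintro ⟨g, hmonic, hdeg, hP⟩
    simp only [hgcd, Nat.div_one] at hP hdeg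
    have hgX : g = Polynomial.X + Polynomial.C (g.coeff 0) := hmonic.eq_X_add_C hdeg
    have hroot : ∀ i : Fin n, x i = - g.coeff 0 := by
      intro i
      have hev : Polynomial.eval (x i) (∏ j : Fin n, (Polynomial.X - Polynomial.C (x j))) = 0 := by
        rw [Polynomial.eval_prod]
        apply Finset.prod_eq_zero (Finset.mem_univ i)
        simp
      rw [hP, Polynomial.eval_pow, hgX] at hev
      have := pow_eq_zero_iff (n := n) (by omega) |>.mp hev
      simp at this
      linear_combination this
    intro i j
    rw [hroot i, hroot j]
  · intro hall
    refine ⟨Polynomial.X - Polynomial.C (x ⟨0, by omega⟩), Polynomial.monic_X_sub_C _, ?_, ?_⟩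
    · rw [hgcd]; exact Polynomial.natDegree_X_sub_C _
    · rw [hgcd, Nat.div_one]
      have hconst : ∀ j ∈ Finset.univ, (Polynomial.X - Polynomial.C (x j))
          = (Polynomial.X - Polynomial.C (x ⟨0, by omega⟩)) := by
        intro j _
        rw [hall j ⟨0, by omega⟩]
      rw [Finset.prod_congr rfl hconst, Finset.prod_const, Finset.card_univ, Fintype.card_fin]
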